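/- For every ultrafilter x with L_n ∈ x there is a chain of ultrafilters x_1, …, x_{n-1} with L_i ∈ x_i such that x_1 ∼∣ x_2 ∼∣ ⋯ ∼∣ x_{n-1} ∼∣ x, where ∼∣ is the tilde-divisibility relation. -/
import Mathlib


/-- `L n` : positive naturals with exactly `n` prime factors counted with multiplicity. -/
def L (n : ℕ) : Set ℕ+ := {m : ℕ+ | (m : ℕ).primeFactorsList.length = n}

/-- Product of ultrafilters on `ℕ+`: `A ∈ umul x y ↔ {n | {m | n*m ∈ A} ∈ y} ∈ x`. -/
def umul (x y : Ultrafilter ℕ+) : Ultrafilter ℕ+ :=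
  x.bind fun n => y.map fun m => n * m

/-- tilde-divisibility. -/
def tdvd (u v : Ultrafilter ℕ+) : Prop :=
  ∀ A ∈ u, {m : ℕ+ | ∃ a ∈ A, a ∣ m} ∈ v

/-- irreducible ultrafilter. -/
def Irred (p : Ultrafilter ℕ+) : Prop :=
  p ≠ pure 1 ∧ ∀ x y : Ultrafilter ℕ+, p = umul x y → x = pure 1 ∨ y = pure 1

/-- product of the first `i` prime factors of `m`. -/
def trunc (i : ℕ) (m : ℕ+) : ℕ+ :=
  ⟨((m : ℕ).primeFactorsList.take i).prod, by
    apply List.prod_pos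
    intro p hp
    exact (Nat.prime_of_mem_primeFactorsList (List.mem_of_mem_take hp)).pos⟩

lemma trunc_primes (i : ℕ) (m : ℕ+) :
    ∀ p ∈ (m : ℕ).primeFactorsList.take i, p.Prime :=
  fun _ hp => Nat.prime_of_mem_primeFactorsList (List.mem_of_mem_take hp)

lemma trunc_perm (i : ℕ) (m : ℕ+) :
    ((trunc i m : ℕ)).primeFactorsList.Perm ((m : ℕ).primeFactorsList.take i) :=
  (Nat.primeFactorsList_unique rfl fun p hp =>
    trunc_primes i m p hp).symm

lemma trunc_dvd (i : ℕ) (m : ℕ+) : trunc i m ∣ m := by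
  rw [PNat.dvd_iff]
  show (((m : ℕ).primeFactorsList.take i).prod : ℕ) ∣ (m : ℕ)
  conv_rhs => rw [← Nat.prod_primeFactorsList m.ne_zero,
    ← List.prod_take_mul_prod_drop (m : ℕ).primeFactorsList i]
  exact Dvd.intro _ rfl

lemma trunc_dvd_trunc (i : ℕ) (m : ℕ+) : trunc i m ∣ trunc (i + 1) m := by
  rw [PNat.dvd_iff]
  show (((m : ℕ).primeFactorsList.take i).prod : ℕ) ∣ _
  have h : (m : ℕ).primeFactorsList.take i =
      ((m : ℕ).primeFactorsList.take (i + 1)).take i := by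
    rw [List.take_take]; congr 1; omega
  rw [h]
  conv_rhs => rw [show (((trunc (i+1) m : ℕ+) : ℕ)) = ((m : ℕ).primeFactorsList.take (i+1)).prod from rfl,
    ← List.prod_take_mul_prod_drop ((m : ℕ).primeFactorsList.take (i+1)) i]
  exact Dvd.intro _ rfl

lemma trunc_mem_L {n : ℕ} (i : ℕ) (hi : i ≤ n) {m : ℕ+} (hm : m ∈ L n) :
    trunc i m ∈ L i := by
  have := (trunc_perm i m).length_eq
  simp only [L, Set.mem_setOf_eq] at hm ⊢
  rw [this, List.length_take, hm]
  omega

theorem stmt_13 (n : ℕ) (hn : 1 ≤ n) (x : Ultrafilter ℕ+) (hx : L n ∈ x) :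
    ∃ c : ℕ → Ultrafilter ℕ+,
      (∀ i, 1 ≤ i → i < n → L i ∈ c i) ∧
      (∀ i, 1 ≤ i → i + 1 < n → tdvd (c i) (c (i + 1))) ∧
      (2 ≤ n → tdvd (c (n - 1)) x) := by
  refine ⟨fun i => x.map (trunc i), ?_, ?_, ?_⟩
  · intro i _ hilt
    have : L n ⊆ trunc i ⁻¹' (L i) := fun m hm => trunc_mem_L i hilt.le hm
    exact x.mem_of_superset hx this
  · intro i _ _ A hA
    rw [Ultrafilter.mem_map] at hA ⊢
    refine x.mem_of_superset hA fun m hm => ?_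
    exact ⟨trunc i m, hm, trunc_dvd_trunc i m⟩
  · intro _ A hA
    rw [Ultrafilter.mem_map] at hA
    refine x.mem_of_superset hA fun m hm => ?_
    exact ⟨trunc (n - 1) m, hm, trunc_dvd _ m⟩
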